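/- Let d = 4 and let u, v ∈ S³ be linearly independent unit vectors, β = ∠(u,v), L = u^⊥ ∩ v^⊥ ∈ G(4,2). Let U ⊂ u^⊥ and V ⊂ v^⊥ be one-dimensional subspaces spanned by unit vectors u₁ and v₁ respectively, with α_U = ∠(U, L), α_V = ∠(V, L), and γ the angle between the projections of U and V onto L (when defined). Then ‖u₁ ∧ u ∧ v₁ ∧ v‖² = sin²β · cos²α_U · cos²α_V · sin²γ. -/

import Mathlib

open scoped RealInnerProductSpace
open InnerProductGeometry

/-- The Gram-determinant squared norm `‖c₁ ∧ c₂ ∧ c₃ ∧ c₄‖² = det((⟨c_i, c_j⟩))`. -/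
noncomputable def wedgeNormSq4 (c : Fin 4 → EuclideanSpace ℝ (Fin 4)) : ℝ :=
  Matrix.det (Matrix.of fun i j => ⟪c i, c j⟫)

private lemma sq_div_self'' (x : ℝ) : x ^ 2 / x = x := by
  rcases eq_or_ne x 0 with h | h
  · simp [h]
  · field_simp

set_option maxHeartbeats 2000000 in
/-- In `ℝ⁴`: let `u, v` be linearly independent unit vectors, `β = ∠(u,v)`,
`L = u^⊥ ∩ v^⊥`, and let `U = Lin{u₁} ⊂ u^⊥`, `V = Lin{v₁} ⊂ v^⊥` be lines spanned by
unit vectors, with `α_U = ∠(u₁, u₁|L)`, `α_V = ∠(v₁, v₁|L)` (the angles to `L`, equal to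
`π/2` in the degenerate cases) and `γ = ∠(u₁|L, v₁|L)` the angle between the projections
onto `L`.  Then `‖u₁ ∧ u ∧ v₁ ∧ v‖² = sin²β · cos²α_U · cos²α_V · sin²γ`. -/
theorem wedge_normSq_angles (u v u₁ v₁ : EuclideanSpace ℝ (Fin 4))
    (hu : ‖u‖ = 1) (hv : ‖v‖ = 1) (huv : LinearIndependent ℝ ![u, v])
    (hu₁ : ‖u₁‖ = 1) (hv₁ : ‖v₁‖ = 1) (hu₁u : ⟪u₁, u⟫ = 0) (hv₁v : ⟪v₁, v⟫ = 0)
    (L : Submodule ℝ (EuclideanSpace ℝ (Fin 4)))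
    (hL : L = (Submodule.span ℝ {u})ᗮ ⊓ (Submodule.span ℝ {v})ᗮ) :
    wedgeNormSq4 ![u₁, u, v₁, v] =
      Real.sin (angle u v) ^ 2 *
        Real.cos (angle u₁ ((L.orthogonalProjectionOnto u₁ : L) : EuclideanSpace ℝ (Fin 4))) ^ 2 *
        Real.cos (angle v₁ ((L.orthogonalProjectionOnto v₁ : L) : EuclideanSpace ℝ (Fin 4))) ^ 2 *
        Real.sin (angle ((L.orthogonalProjectionOnto u₁ : L) : EuclideanSpace ℝ (Fin 4))
          ((L.orthogonalProjectionOnto v₁ : L) : EuclideanSpace ℝ (Fin 4))) ^ 2 := by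
  set a : ℝ := ⟪u₁, v₁⟫ with ha
  set b : ℝ := ⟪u₁, v⟫ with hb
  set c : ℝ := ⟪u, v₁⟫ with hc
  set t : ℝ := ⟪u, v⟫ with ht
  rw [linearIndependent_fin2] at huv
  simp only [Matrix.cons_val_one, Matrix.head_cons, Matrix.cons_val_zero, ne_eq] at huv
  have huv1 : u ≠ v := fun h => huv.2 1 (by simp [h])
  have huv2 : u ≠ -v := fun h => huv.2 (-1) (by simp [h, neg_smul])
  have ht1 : t < 1 := by
    rw [ht]; exact (inner_lt_one_iff_real_of_norm_eq_one hu hv).2 huv1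
  have ht2 : -1 < t := by
    have h9 : ‖(-v : EuclideanSpace ℝ (Fin 4))‖ = 1 := by simpa using hv
    have := (inner_lt_one_iff_real_of_norm_eq_one hu h9).2 huv2
    rw [inner_neg_right] at this
    rw [ht]; linarith
  have hs0 : (0:ℝ) < 1 - t ^ 2 := by nlinarith
  have hs : (1:ℝ) - t ^ 2 ≠ 0 := ne_of_gt hs0
  have i1 : ⟪u₁, u₁⟫ = (1:ℝ) := by rw [real_inner_self_eq_norm_sq, hu₁]; norm_num
  have i2 : ⟪u, u⟫ = (1:ℝ) := by rw [real_inner_self_eq_norm_sq, hu]; norm_num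
  have i3 : ⟪v₁, v₁⟫ = (1:ℝ) := by rw [real_inner_self_eq_norm_sq, hv₁]; norm_num
  have i4 : ⟪v, v⟫ = (1:ℝ) := by rw [real_inner_self_eq_norm_sq, hv]; norm_num
  have j1 : ⟪u, u₁⟫ = (0:ℝ) := by rw [real_inner_comm]; exact hu₁u
  have j2 : ⟪v, v₁⟫ = (0:ℝ) := by rw [real_inner_comm]; exact hv₁v
  have j3 : ⟪v₁, u₁⟫ = a := by rw [ha, real_inner_comm]
  have j4 : ⟪v, u₁⟫ = b := by rw [hb, real_inner_comm]
  have j5 : ⟪v₁, u⟫ = c := by rw [hc, real_inner_comm]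
  have j6 : ⟪v, u⟫ = t := by rw [ht, real_inner_comm]
  set p : EuclideanSpace ℝ (Fin 4) := u₁ - (b / (1 - t ^ 2)) • (v - t • u) with hp
  set q : EuclideanSpace ℝ (Fin 4) := v₁ - (c / (1 - t ^ 2)) • (u - t • v) with hq
  have memL : ∀ w : EuclideanSpace ℝ (Fin 4), w ∈ L ↔ ⟪u, w⟫ = 0 ∧ ⟪v, w⟫ = 0 := by
    intro w
    rw [hL, Submodule.mem_inf, Submodule.mem_orthogonal_singleton_iff_inner_right,
      Submodule.mem_orthogonal_singleton_iff_inner_right]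
  have hup : ⟪u, p⟫ = 0 := by
    simp only [hp, inner_sub_right, real_inner_smul_right, i1, i2, i3, i4, j1, j2, j3, j4,
      j5, j6, hu₁u, hv₁v, ← ha, ← hb, ← hc, ← ht]
    field_simp
    try ring
  have hvp : ⟪v, p⟫ = 0 := by
    simp only [hp, inner_sub_right, real_inner_smul_right, i1, i2, i3, i4, j1, j2, j3, j4,
      j5, j6, hu₁u, hv₁v, ← ha, ← hb, ← hc, ← ht]
    field_simp
    try ring
  have huq : ⟪u, q⟫ = 0 := by
    simp only [hq, inner_sub_right, real_inner_smul_right, i1, i2, i3, i4, j1, j2, j3, j4,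
      j5, j6, hu₁u, hv₁v, ← ha, ← hb, ← hc, ← ht]
    field_simp
    try ring
  have hvq : ⟪v, q⟫ = 0 := by
    simp only [hq, inner_sub_right, real_inner_smul_right, i1, i2, i3, i4, j1, j2, j3, j4,
      j5, j6, hu₁u, hv₁v, ← ha, ← hb, ← hc, ← ht]
    field_simp
    try ring
  have hprojU : ((L.orthogonalProjectionOnto u₁ : L) : EuclideanSpace ℝ (Fin 4)) = p := by
    apply Submodule.eq_starProjection_of_mem_of_inner_eq_zero (K := L)
    · exact (memL p).2 ⟨hup, hvp⟩
    · intro w hw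
      obtain ⟨hw1, hw2⟩ := (memL w).1 hw
      have h5 : u₁ - p = (b / (1 - t ^ 2)) • (v - t • u) := by rw [hp]; abel
      rw [h5, real_inner_smul_left, inner_sub_left, real_inner_smul_left, hw1, hw2]
      ring
  have hprojV : ((L.orthogonalProjectionOnto v₁ : L) : EuclideanSpace ℝ (Fin 4)) = q := by
    apply Submodule.eq_starProjection_of_mem_of_inner_eq_zero (K := L)
    · exact (memL q).2 ⟨huq, hvq⟩
    · intro w hw
      obtain ⟨hw1, hw2⟩ := (memL w).1 hw
      have h5 : v₁ - q = (c / (1 - t ^ 2)) • (u - t • v) := by rw [hq]; abel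
      rw [h5, real_inner_smul_left, inner_sub_left, real_inner_smul_left, hw1, hw2]
      ring
  rw [hprojU, hprojV]
  have hu₁p : ⟪u₁, p⟫ = 1 - b ^ 2 / (1 - t ^ 2) := by
    simp only [hp, inner_sub_right, real_inner_smul_right, i1, i2, i3, i4, j1, j2, j3, j4,
      j5, j6, hu₁u, hv₁v, ← ha, ← hb, ← hc, ← ht]
    field_simp
    try ring
  have hv₁q : ⟪v₁, q⟫ = 1 - c ^ 2 / (1 - t ^ 2) := by
    simp only [hq, inner_sub_right, real_inner_smul_right, i1, i2, i3, i4, j1, j2, j3, j4,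
      j5, j6, hu₁u, hv₁v, ← ha, ← hb, ← hc, ← ht]
    field_simp
    try ring
  have hu₁q : ⟪u₁, q⟫ = a + t * b * c / (1 - t ^ 2) := by
    simp only [hq, inner_sub_right, real_inner_smul_right, i1, i2, i3, i4, j1, j2, j3, j4,
      j5, j6, hu₁u, hv₁v, ← ha, ← hb, ← hc, ← ht]
    field_simp
    try ring
  have hpp : ⟪p, p⟫ = 1 - b ^ 2 / (1 - t ^ 2) := by
    have h5 : ⟪p, p⟫ = ⟪u₁, p⟫ - (b / (1 - t ^ 2)) * (⟪v, p⟫ - t * ⟪u, p⟫) := by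
      nth_rewrite 1 [hp]
      rw [inner_sub_left, real_inner_smul_left, inner_sub_left, real_inner_smul_left]
      try ring
    rw [h5, hup, hvp, hu₁p]; try ring
  have hqq : ⟪q, q⟫ = 1 - c ^ 2 / (1 - t ^ 2) := by
    have h5 : ⟪q, q⟫ = ⟪v₁, q⟫ - (c / (1 - t ^ 2)) * (⟪u, q⟫ - t * ⟪v, q⟫) := by
      nth_rewrite 1 [hq]
      rw [inner_sub_left, real_inner_smul_left, inner_sub_left, real_inner_smul_left]
      try ring
    rw [h5, huq, hvq, hv₁q]; try ring
  have hpq : ⟪p, q⟫ = a + t * b * c / (1 - t ^ 2) := by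
    have h5 : ⟪p, q⟫ = ⟪u₁, q⟫ - (b / (1 - t ^ 2)) * (⟪v, q⟫ - t * ⟪u, q⟫) := by
      nth_rewrite 1 [hp]
      rw [inner_sub_left, real_inner_smul_left, inner_sub_left, real_inner_smul_left]
      try ring
    rw [h5, huq, hvq, hu₁q]; try ring
  have hsinβ : Real.sin (angle u v) ^ 2 = 1 - t ^ 2 := by
    rw [Real.sin_sq, cos_angle, hu, hv, ← ht]
    norm_num
  have key : Real.cos (angle u₁ p) ^ 2 * Real.cos (angle v₁ q) ^ 2 *
      Real.sin (angle p q) ^ 2 = ⟪p, p⟫ * ⟪q, q⟫ - ⟪p, q⟫ ^ 2 := by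
    rcases eq_or_ne p 0 with hp0 | hp0
    · rw [hp0, show Real.cos (angle u₁ (0 : EuclideanSpace ℝ (Fin 4))) = 0 by
        rw [cos_angle]; simp]
      simp
    rcases eq_or_ne q 0 with hq0 | hq0
    · rw [hq0, show Real.cos (angle v₁ (0 : EuclideanSpace ℝ (Fin 4))) = 0 by
        rw [cos_angle]; simp]
      simp
    have hnp0 : ‖p‖ ≠ 0 := by simpa using hp0
    have hnq0 : ‖q‖ ≠ 0 := by simpa using hq0
    have hcU : Real.cos (angle u₁ p) ^ 2 = ⟪p, p⟫ := by
      have h6 : ⟪u₁, p⟫ = ⟪p, p⟫ := by rw [hu₁p, hpp]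
      rw [cos_angle, hu₁, one_mul, div_pow, h6, real_inner_self_eq_norm_sq,
        sq_div_self'']
    have hcV : Real.cos (angle v₁ q) ^ 2 = ⟪q, q⟫ := by
      have h6 : ⟪v₁, q⟫ = ⟪q, q⟫ := by rw [hv₁q, hqq]
      rw [cos_angle, hv₁, one_mul, div_pow, h6, real_inner_self_eq_norm_sq,
        sq_div_self'']
    have hsγ : Real.sin (angle p q) ^ 2 = 1 - ⟪p, q⟫ ^ 2 / (‖p‖ ^ 2 * ‖q‖ ^ 2) := by
      rw [Real.sin_sq, cos_angle, div_pow, mul_pow]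
    rw [hcU, hcV, hsγ, real_inner_self_eq_norm_sq, real_inner_self_eq_norm_sq]
    field_simp
    try ring
  have hrhs : Real.sin (angle u v) ^ 2 * Real.cos (angle u₁ p) ^ 2 *
      Real.cos (angle v₁ q) ^ 2 * Real.sin (angle p q) ^ 2 =
      (1 - t ^ 2) * ((1 - b ^ 2 / (1 - t ^ 2)) * (1 - c ^ 2 / (1 - t ^ 2)) -
        (a + t * b * c / (1 - t ^ 2)) ^ 2) := by
    rw [show Real.sin (angle u v) ^ 2 * Real.cos (angle u₁ p) ^ 2 *
        Real.cos (angle v₁ q) ^ 2 * Real.sin (angle p q) ^ 2 =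
        Real.sin (angle u v) ^ 2 * (Real.cos (angle u₁ p) ^ 2 *
        Real.cos (angle v₁ q) ^ 2 * Real.sin (angle p q) ^ 2) by ring,
      key, hpp, hqq, hpq, hsinβ]
  rw [hrhs]
  -- now compute the Gram determinant
  rw [wedgeNormSq4, Matrix.det_succ_row_zero]
  simp [Fin.sum_univ_succ, Matrix.det_fin_three, Matrix.submatrix_apply, Fin.succAbove,
    show Fin.succ (2 : Fin 3) = (3 : Fin 4) from rfl,
    show Fin.castSucc (2 : Fin 3) = (2 : Fin 4) from rfl, -PiLp.inner_apply,
    i1, i2, i3, i4, j1, j2, j3, j4, j5, j6, hu₁u, hv₁v, ← ha, ← hb, ← hc, ← ht, hu, hv, hu₁, hv₁]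
  field_simp
  ring
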